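/- Let 𝒜 be a Hilbert evolution algebra with a natural orthonormal basis 𝓑 = {e_i}_{i∈ℕ}. If 𝒜 is nil, then there are no oriented cycles in G(𝒜,𝓑) and δ(G_i(𝒜,𝓑)) < ∞ for every i ∈ ℕ. -/

import Mathlib

noncomputable section

open scoped ENat

/-! ### Digraph notions associated to a matrix of structural constants

The associated digraph `G(𝒜,𝓑)` has vertex set `ℕ` and a directed edge `(i,k)` iff
`ω i k ≠ 0`. -/

/-- `DsetU ω m U` is the set `D^m(U)` of `m`-th generation descendants of `U`:
`D^0(U) = U` and `D^{m+1}(U) = {k | ∃ i ∈ D^m(U), ω i k ≠ 0}`. -/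
def DsetU (ω : ℕ → ℕ → ℂ) : ℕ → Set ℕ → Set ℕ
  | 0, U => U
  | m + 1, U => {k | ∃ i ∈ DsetU ω m U, ω i k ≠ 0}

/-- `Dm ω m i = D^m(i)`, the `m`-th generation descendants of the vertex `i`. -/
def Dm (ω : ℕ → ℕ → ℂ) (m i : ℕ) : Set ℕ := DsetU ω m {i}

/-- `Desc ω i = D(i) = ⋃_{m ≥ 1} D^m(i)`, the set of descendants of `i`. -/
def Desc (ω : ℕ → ℕ → ℂ) (i : ℕ) : Set ℕ := ⋃ m ∈ {m : ℕ | 1 ≤ m}, Dm ω m i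

/-- `gdist ω i u` is the length of a shortest directed path (walk) from `i` to `u`. -/
def gdist (ω : ℕ → ℕ → ℂ) (i u : ℕ) : ℕ := sInf {n : ℕ | u ∈ Dm ω n i}

/-- The depth `δ(G_i) = sup {dist(i,u) : u ∈ D(i)}` of the subgraph `G_i` induced on the
descendants of `i`, as an extended natural number (`⊤` when unbounded). -/
def depth (ω : ℕ → ℕ → ℂ) (i : ℕ) : ℕ∞ := ⨆ u ∈ Desc ω i, (gdist ω i u : ℕ∞)

/-- `p 0, p 1, …, p n` is an oriented cycle: a non-empty directed path in which the only
repeated vertices are the first and the last one. -/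
def IsOrientedCycle (ω : ℕ → ℕ → ℂ) (n : ℕ) (p : ℕ → ℕ) : Prop :=
  0 < n ∧ (∀ m < n, ω (p m) (p (m + 1)) ≠ 0) ∧ p n = p 0 ∧
    ∀ a b, a < b → b < n → p a ≠ p b

/-- The digraph associated to `ω` contains an oriented cycle. -/
def HasOrientedCycle (ω : ℕ → ℕ → ℂ) : Prop := ∃ n p, IsOrientedCycle ω n p

/-! ### Algebra notions -/

variable {H : Type*} [NormedAddCommGroup H] [InnerProductSpace ℂ H] [CompleteSpace H]

/-- The structural constants of a Hilbert evolution algebra with product `mul` relative to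
the natural orthonormal basis `e`: `ω i k` is the `k`-th coordinate of `e i · e i`,
so that `e i · e i = ∑'_k ω i k • e k`. -/
def structConst (mul : H →ₗ[ℂ] H →ₗ[ℂ] H) (e : HilbertBasis ℕ ℂ H) (i k : ℕ) : ℂ :=
  e.repr (mul (e i) (e i)) k

/-- Principal powers: `ppow mul v n = v^n` for `n ≥ 1` (with the junk value `v` at `n = 0`):
`v^1 = v` and `v^{n+1} = v^n · v`. -/
def ppow (mul : H →ₗ[ℂ] H →ₗ[ℂ] H) (v : H) : ℕ → H
  | 0 => v
  | 1 => v
  | n + 2 => mul (ppow mul v (n + 1)) v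

/-- The algebra is nil: every element has a vanishing principal power. -/
def IsNil (mul : H →ₗ[ℂ] H →ₗ[ℂ] H) : Prop := ∀ v : H, ∃ n : ℕ, 1 ≤ n ∧ ppow mul v n = 0

/-- The product `S·T` of two subspaces: the span of all products `x·y`, `x ∈ S`, `y ∈ T`. -/
def mulSub (mul : H →ₗ[ℂ] H →ₗ[ℂ] H) (S T : Submodule ℂ H) : Submodule ℂ H :=
  Submodule.span ℂ {z : H | ∃ x ∈ S, ∃ y ∈ T, z = mul x y}

/-- The powers `𝒜^n` (for `n ≥ 1`, with the junk value `⊤` at `n = 0`):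
`𝒜^1 = 𝒜` and `𝒜^{n+1} = ∑_{i=1}^{n} 𝒜^i 𝒜^{n+1-i}`. -/
def apow (mul : H →ₗ[ℂ] H →ₗ[ℂ] H) (n : ℕ) : Submodule ℂ H :=
  n.strongRecOn fun n ih =>
    match n, ih with
    | 0, _ => ⊤
    | 1, _ => ⊤
    | m + 2, ih =>
      ⨆ (i : ℕ) (h1 : 1 ≤ i) (h2 : i ≤ m + 1),
        mulSub mul (ih i (by omega)) (ih (m + 2 - i) (by omega))

/-- The algebra is nilpotent: `𝒜^n = 0` for some `n`. -/
def IsNilpotent' (mul : H →ₗ[ℂ] H →ₗ[ℂ] H) : Prop := ∃ n : ℕ, 1 ≤ n ∧ apow mul n = ⊥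

/-- The right powers `𝒜^{<n>}` (for `n ≥ 1`, with the junk value `⊤` at `n = 0`):
`𝒜^{<1>} = 𝒜` and `𝒜^{<n+1>} = 𝒜^{<n>}𝒜`. -/
def rapow (mul : H →ₗ[ℂ] H →ₗ[ℂ] H) : ℕ → Submodule ℂ H
  | 0 => ⊤
  | 1 => ⊤
  | n + 2 => mulSub mul (rapow mul (n + 1)) ⊤

/-- The algebra is right nilpotent: `𝒜^{<n>} = 0` for some `n`. -/
def IsRightNilpotent (mul : H →ₗ[ℂ] H →ₗ[ℂ] H) : Prop := ∃ n : ℕ, 1 ≤ n ∧ rapow mul n = ⊥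

/-- The index of right nilpotency `n_r(𝒜) = min {n : 𝒜^{<n>} = 0}`. -/
def rNilIndex (mul : H →ₗ[ℂ] H →ₗ[ℂ] H) : ℕ := sInf {n : ℕ | 1 ≤ n ∧ rapow mul n = ⊥}

/-- Powers of a subset `I ⊆ 𝒜` (for `n ≥ 1`, with the junk value `I` at `n = 0`):
`I^{<1>} = I` and `I^{<n+1>}` is the set of finite sums `∑_j x_j · y_j` with
`x_j ∈ I^{<n>}` and `y_j ∈ I`. -/
def setPow (mul : H →ₗ[ℂ] H →ₗ[ℂ] H) (I : Set H) : ℕ → Set H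
  | 0 => I
  | 1 => I
  | n + 2 => {v : H | ∃ (m : ℕ) (x y : Fin m → H),
      (∀ j, x j ∈ setPow mul I (n + 1)) ∧ (∀ j, y j ∈ I) ∧
        v = ∑ j, mul (x j) (y j)}

end

noncomputable section

variable {H : Type*} [NormedAddCommGroup H] [InnerProductSpace ℂ H] [CompleteSpace H]

/-! ### Auxiliary graph lemmas -/

lemma dsetU_mono (ω : ℕ → ℕ → ℂ) : ∀ (m : ℕ) {U V : Set ℕ}, U ⊆ V → DsetU ω m U ⊆ DsetU ω m V
  | 0, _, _, h => h
  | m + 1, U, V, h => by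
    rintro k ⟨i, hi, hωi⟩
    exact ⟨i, dsetU_mono ω m h hi, hωi⟩

lemma dsetU_add (ω : ℕ → ℕ → ℂ) (a : ℕ) : ∀ (b : ℕ) (U : Set ℕ),
    DsetU ω (a + b) U = DsetU ω b (DsetU ω a U) := by
  intro b
  induction b with
  | zero => intro U; rfl
  | succ b ih =>
    intro U
    show DsetU ω (a + b + 1) U = DsetU ω (b + 1) (DsetU ω a U)
    simp only [DsetU, ih]

lemma dm_trans {ω : ℕ → ℕ → ℂ} {a b i x u : ℕ} (h1 : x ∈ Dm ω a i) (h2 : u ∈ Dm ω b x) :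
    u ∈ Dm ω (a + b) i := by
  have h3 : Dm ω (a + b) i = DsetU ω b (Dm ω a i) := dsetU_add ω a b {i}
  rw [h3]
  exact dsetU_mono ω b (Set.singleton_subset_iff.mpr h1) h2

lemma mem_dm_iff (ω : ℕ → ℕ → ℂ) (i : ℕ) : ∀ (n : ℕ) (u : ℕ),
    u ∈ Dm ω n i ↔ ∃ f : ℕ → ℕ, f 0 = i ∧ f n = u ∧ ∀ t < n, ω (f t) (f (t + 1)) ≠ 0 := by
  intro n
  induction n with
  | zero =>
    intro u
    have h : u ∈ Dm ω 0 i ↔ u = i := Set.mem_singleton_iff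
    rw [h]
    constructor
    · intro hu; exact ⟨fun _ => i, rfl, hu.symm, by omega⟩
    · rintro ⟨f, h0, hn, -⟩; rw [← hn, h0]
  | succ n ih =>
    intro u
    have hdef : u ∈ Dm ω (n + 1) i ↔ ∃ x ∈ Dm ω n i, ω x u ≠ 0 := Iff.rfl
    rw [hdef]
    constructor
    · rintro ⟨x, hx, hxu⟩
      obtain ⟨f, h0, hn, he⟩ := (ih x).mp hx
      refine ⟨fun t => if t = n + 1 then u else f t, by simp [h0], by simp, ?_⟩
      intro t ht
      rcases Nat.lt_succ_iff_lt_or_eq.mp ht with h | rfl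
      · have h1 : t ≠ n + 1 := by omega
        have h2 : t + 1 ≠ n + 1 := by omega
        simpa [h1, h2, show t ≠ n by omega] using he t h
      · have h1 : t ≠ t + 1 := by omega
        simpa [h1, hn] using hxu
    · rintro ⟨f, h0, hn, he⟩
      refine ⟨f n, (ih (f n)).mpr ⟨f, h0, rfl, fun t ht => he t (by omega)⟩, ?_⟩
      rw [← hn]
      exact he n (Nat.lt_succ_self n)

lemma cycle_of_segment (ω : ℕ → ℕ → ℂ) (f : ℕ → ℕ) (s t : ℕ) (hst : s ≤ t)
    (hedge : ∀ m, s ≤ m → m < t → ω (f m) (f (m + 1)) ≠ 0)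
    (hback : ω (f t) (f s) ≠ 0)
    (hinj : ∀ x y, s ≤ x → x ≤ t → s ≤ y → y ≤ t → f x = f y → x = y) :
    HasOrientedCycle ω := by
  set n := t - s + 1 with hn
  refine ⟨n, fun m => f (s + m % n), by omega, ?_, ?_, ?_⟩
  · intro m hm
    show ω (f (s + m % n)) (f (s + (m + 1) % n)) ≠ 0
    have hmn : m % n = m := Nat.mod_eq_of_lt hm
    rcases eq_or_lt_of_le (Nat.succ_le_of_lt hm) with h | h
    · have h1 : (m + 1) % n = 0 := by rw [show m + 1 = n from h, Nat.mod_self]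
      rw [hmn, h1, Nat.add_zero]
      have hm' : s + m = t := by omega
      rw [hm']
      exact hback
    · have h1 : (m + 1) % n = m + 1 := Nat.mod_eq_of_lt h
      rw [hmn, h1, show s + (m + 1) = (s + m) + 1 from by omega]
      exact hedge (s + m) (by omega) (by omega)
  · show f (s + n % n) = f (s + 0 % n)
    rw [Nat.mod_self, Nat.zero_mod]
  · intro x y hxy hyn
    show f (s + x % n) ≠ f (s + y % n)
    have hx : x % n = x := Nat.mod_eq_of_lt (by omega)
    have hy : y % n = y := Nat.mod_eq_of_lt hyn
    rw [hx, hy]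
    intro hcon
    have := hinj (s + x) (s + y) (by omega) (by omega) (by omega) (by omega) hcon
    omega

/-! ### Auxiliary algebra lemmas -/

/-- The `c`-th coordinate functional relative to the Hilbert basis `e`. -/
def coefL (e : HilbertBasis ℕ ℂ H) (c : ℕ) : H →ₗ[ℂ] ℂ where
  toFun x := e.repr x c
  map_add' x y := by simp [map_add, lp.coeFn_add]
  map_smul' r x := by simp [map_smul, lp.coeFn_smul]

lemma mul_e_eq (mul : H →ₗ[ℂ] H →ₗ[ℂ] H) (hcomm : ∀ x y : H, mul x y = mul y x)
    (hcont : ∀ x : H, Continuous fun y => mul x y) (e : HilbertBasis ℕ ℂ H)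
    (hnat : ∀ i j : ℕ, i ≠ j → mul (e i) (e j) = 0) (x : H) (j : ℕ) :
    mul x (e j) = e.repr x j • mul (e j) (e j) := by
  rw [hcomm]
  set T : H →L[ℂ] H := ⟨mul (e j), hcont (e j)⟩ with hT
  have h1 : HasSum (fun k => e.repr x k • e k) x := e.hasSum_repr x
  have h2 : HasSum (fun k => e.repr x k • mul (e j) (e k)) (mul (e j) x) := by
    have h3 := T.hasSum h1
    simpa [hT, map_smul] using h3
  have h4 : HasSum (fun k => e.repr x k • mul (e j) (e k)) (e.repr x j • mul (e j) (e j)) := by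
    have h5 : ∀ k, k ≠ j → e.repr x k • mul (e j) (e k) = 0 := by
      intro k hk; rw [hnat j k (Ne.symm hk), smul_zero]
    exact hasSum_single (f := fun k => e.repr x k • mul (e j) (e k)) j h5
  exact h2.unique h4

lemma repr_mul_e (mul : H →ₗ[ℂ] H →ₗ[ℂ] H) (hcomm : ∀ x y : H, mul x y = mul y x)
    (hcont : ∀ x : H, Continuous fun y => mul x y) (e : HilbertBasis ℕ ℂ H)
    (hnat : ∀ i j : ℕ, i ≠ j → mul (e i) (e j) = 0) (ω : ℕ → ℕ → ℂ)
    (hω : ∀ i k : ℕ, ω i k = structConst mul e i k) (x : H) (j k : ℕ) :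
    e.repr (mul x (e j)) k = e.repr x j * ω j k := by
  rw [mul_e_eq mul hcomm hcont e hnat x j, hω]
  simp [structConst, map_smul, lp.coeFn_smul]

lemma key_lemma (mul : H →ₗ[ℂ] H →ₗ[ℂ] H) (hcomm : ∀ x y : H, mul x y = mul y x)
    (hcont : ∀ x : H, Continuous fun y => mul x y) (e : HilbertBasis ℕ ℂ H)
    (hnat : ∀ i j : ℕ, i ≠ j → mul (e i) (e j) = 0) (ω : ℕ → ℕ → ℂ)
    (hω : ∀ i k : ℕ, ω i k = structConst mul e i k)
    (s : Finset ℕ) (κ : ℕ → ℕ) (M : ℕ)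
    (h0 : κ 0 ∈ s)
    (hmem : ∀ m < M, κ m ∈ s)
    (hedge : ∀ m < M, ω (κ m) (κ (m + 1)) ≠ 0)
    (huniq : ∀ m < M, ∀ j ∈ s, ω j (κ (m + 1)) ≠ 0 → j = κ m) :
    ∀ m ≤ M, e.repr (ppow mul (∑ j ∈ s, e j) (m + 1)) (κ m) ≠ 0 := by
  set v := ∑ j ∈ s, e j with hv
  have hco : ∀ (x : H) (c : ℕ), e.repr x c = coefL e c x := fun _ _ => rfl
  have hreprE : ∀ c j : ℕ, e.repr (e j) c = if c = j then 1 else 0 := by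
    intro c j
    rw [e.repr_apply_apply]
    exact orthonormal_iff_ite.mp e.orthonormal c j
  have hreprv : ∀ c ∈ s, e.repr v c = 1 := by
    intro c hc
    rw [hv, hco, map_sum]
    have h1 : ∀ j ∈ s, coefL e c (e j) = if c = j then 1 else 0 := fun j _ => hreprE c j
    rw [Finset.sum_congr rfl h1, Finset.sum_ite_eq s c (fun _ => (1 : ℂ))]
    simp [hc]
  have hstep : ∀ (x : H) (c : ℕ), e.repr (mul x v) c = ∑ j ∈ s, e.repr x j * ω j c := by
    intro x c
    rw [hv, map_sum (mul x), hco, map_sum (coefL e c)]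
    refine Finset.sum_congr rfl fun j _ => ?_
    rw [← hco]
    exact repr_mul_e mul hcomm hcont e hnat ω hω x j c
  intro m
  induction m with
  | zero =>
    intro _
    have h1 : ppow mul v 1 = v := rfl
    rw [h1, hreprv (κ 0) h0]
    exact one_ne_zero
  | succ m ih =>
    intro hm1
    have hmM : m < M := by omega
    have h2 : ppow mul v (m + 2) = mul (ppow mul v (m + 1)) v := rfl
    rw [h2, hstep]
    rw [Finset.sum_eq_single_of_mem (κ m) (hmem m hmM) ?_]
    · exact mul_ne_zero (ih (by omega)) (hedge m hmM)
    · intro j hj hne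
      by_cases h : ω j (κ (m + 1)) = 0
      · rw [h, mul_zero]
      · exact absurd (huniq m hmM j hj h) hne

/-! ### No oriented cycles -/

lemma no_cycle (mul : H →ₗ[ℂ] H →ₗ[ℂ] H) (hcomm : ∀ x y : H, mul x y = mul y x)
    (hcont : ∀ x : H, Continuous fun y => mul x y) (e : HilbertBasis ℕ ℂ H)
    (hnat : ∀ i j : ℕ, i ≠ j → mul (e i) (e j) = 0) (ω : ℕ → ℕ → ℂ)
    (hω : ∀ i k : ℕ, ω i k = structConst mul e i k) (hnil : IsNil mul) :
    ¬ HasOrientedCycle ω := by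
  intro hcyc
  have hS : {n : ℕ | ∃ p, IsOrientedCycle ω n p}.Nonempty := by
    obtain ⟨n, p, h⟩ := hcyc; exact ⟨n, p, h⟩
  set r := sInf {n : ℕ | ∃ p, IsOrientedCycle ω n p} with hr
  obtain ⟨p, hp⟩ := Nat.sInf_mem hS
  obtain ⟨hr0, hedges, hpr, hpinj⟩ := hp
  have hmin : ∀ L, L < r → ∀ q, ¬ IsOrientedCycle ω L q := by
    intro L hL q hq
    have hLS : L ∈ {n : ℕ | ∃ p, IsOrientedCycle ω n p} := ⟨q, hq⟩
    exact absurd (Nat.sInf_le hLS) (by omega)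
  have pinj : ∀ x y, x < r → y < r → p x = p y → x = y := by
    intro x y hx hy hxy
    rcases lt_trichotomy x y with h | h | h
    · exact absurd hxy (hpinj x y h hy)
    · exact h
    · exact absurd hxy.symm (hpinj y x h hx)
  have hrpos : 0 < r := hr0
  have hedge' : ∀ c, c < r → ω (p c) (p ((c + 1) % r)) ≠ 0 := by
    intro c hc
    rcases eq_or_lt_of_le (Nat.succ_le_of_lt hc) with h | h
    · have h1 : (c + 1) % r = 0 := by rw [show c + 1 = r from h, Nat.mod_self]
      rw [h1]
      have h2 := hedges c hc
      rwa [show p (c + 1) = p 0 from by rw [show c + 1 = r from h]; exact hpr] at h2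
    · rw [Nat.mod_eq_of_lt h]
      exact hedges c hc
  have chord : ∀ a b, a < r → b < r → ω (p a) (p b) ≠ 0 → b = (a + 1) % r := by
    intro a b ha hb hab
    by_contra hne
    set k := (a + r - b) % r with hk
    have hkr : k < r := Nat.mod_lt _ hrpos
    set L := k + 1 with hL
    have hF0 : (b + k) % r = a := by
      have h1 : (b + k) % r = (b + (a + r - b)) % r := (Nat.mod_modEq (a + r - b) r).add_left b
      rw [h1, show b + (a + r - b) = a + r from by omega, Nat.add_mod_right, Nat.mod_eq_of_lt ha]
    have hLr : L ≤ r := by omega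
    have hcycL : IsOrientedCycle ω L (fun m => p ((b + m % L) % r)) := by
      refine ⟨by omega, ?_, ?_, ?_⟩
      · intro m hm
        show ω (p ((b + m % L) % r)) (p ((b + (m + 1) % L) % r)) ≠ 0
        have hmL : m % L = m := Nat.mod_eq_of_lt hm
        rcases eq_or_lt_of_le (Nat.succ_le_of_lt hm) with h | h
        · have h1 : (m + 1) % L = 0 := by rw [show m + 1 = L from h, Nat.mod_self]
          have hm' : m = k := by omega
          rw [hmL, h1, Nat.add_zero, hm', hF0, Nat.mod_eq_of_lt hb]
          exact hab
        · have h1 : (m + 1) % L = m + 1 := Nat.mod_eq_of_lt h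
          rw [hmL, h1]
          have h2 : (b + m + 1) % r = ((b + m) % r + 1) % r :=
            ((Nat.mod_modEq (b + m) r).add_right 1).symm
          rw [show b + (m + 1) = b + m + 1 from by omega, h2]
          exact hedge' ((b + m) % r) (Nat.mod_lt _ hrpos)
      · show p ((b + L % L) % r) = p ((b + 0 % L) % r)
        rw [Nat.mod_self, Nat.zero_mod]
      · intro x y hxy hyL
        show p ((b + x % L) % r) ≠ p ((b + y % L) % r)
        rw [Nat.mod_eq_of_lt (by omega : x < L), Nat.mod_eq_of_lt hyL]
        intro hcon
        have h1 : (b + x) % r = (b + y) % r :=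
          pinj _ _ (Nat.mod_lt _ hrpos) (Nat.mod_lt _ hrpos) hcon
        have h2 : x % r = y % r := Nat.ModEq.add_left_cancel' b h1
        rw [Nat.mod_eq_of_lt (by omega : x < r), Nat.mod_eq_of_lt (by omega : y < r)] at h2
        omega
    have hLlt : L < r := by
      rcases eq_or_lt_of_le hLr with h | h
      · exfalso
        have hk2 : k = r - 1 := by omega
        apply hne
        have h1 : (a + 1) % r = ((b + k) % r + 1) % r := by rw [hF0]
        have h2 : ((b + k) % r + 1) % r = (b + k + 1) % r :=
          (Nat.mod_modEq (b + k) r).add_right 1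
        rw [h1, h2, show b + k + 1 = b + r from by omega, Nat.add_mod_right,
          Nat.mod_eq_of_lt hb]
      · exact h
    exact hmin L hLlt _ hcycL
  -- now build the element supported on the cycle and contradict nilness
  set s := (Finset.range r).image p with hs
  set κ : ℕ → ℕ := fun m => p (m % r) with hκ
  obtain ⟨n, hn1, hn2⟩ := hnil (∑ j ∈ s, e j)
  have hkey := key_lemma mul hcomm hcont e hnat ω hω s κ (n - 1) ?_ ?_ ?_ ?_ (n - 1) le_rfl
  · rw [show n - 1 + 1 = n from by omega, hn2] at hkey
    exact hkey (by simp)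
  · show p (0 % r) ∈ s
    rw [Nat.zero_mod]
    exact Finset.mem_image.mpr ⟨0, Finset.mem_range.mpr hrpos, rfl⟩
  · intro m _
    exact Finset.mem_image.mpr ⟨m % r, Finset.mem_range.mpr (Nat.mod_lt _ hrpos), rfl⟩
  · intro m _
    show ω (p (m % r)) (p ((m + 1) % r)) ≠ 0
    have h1 : (m % r + 1) % r = (m + 1) % r := (Nat.mod_modEq m r).add_right 1
    rw [← h1]
    exact hedge' (m % r) (Nat.mod_lt _ hrpos)
  · intro m _ j hj hωj
    obtain ⟨a, haR, rfl⟩ := Finset.mem_image.mp hj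
    have haR' : a < r := Finset.mem_range.mp haR
    have hb := chord a ((m + 1) % r) haR' (Nat.mod_lt _ hrpos) hωj
    show p a = p (m % r)
    have h1 : (a + 1) % r = (m + 1) % r := hb.symm
    have h2 : a % r = m % r := Nat.ModEq.add_right_cancel' 1 h1
    rw [← Nat.mod_eq_of_lt haR', h2]

/-! ### Uniform nil exponent via Baire category -/

lemma poly_rep (mul : H →ₗ[ℂ] H →ₗ[ℂ] H) (v0 u : H) :
    ∀ m : ℕ, ∃ (M : ℕ) (a : ℕ → H), ∀ t : ℂ,
      ppow mul (v0 + t • u) (m + 1) = ∑ k ∈ Finset.range M, t ^ k • a k := by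
  intro m
  induction m with
  | zero =>
    refine ⟨2, fun k => if k = 0 then v0 else if k = 1 then u else 0, fun t => ?_⟩
    have h1 : ppow mul (v0 + t • u) 1 = v0 + t • u := rfl
    rw [h1]
    simp [Finset.sum_range_succ]
  | succ m ih =>
    obtain ⟨M, a, ha⟩ := ih
    classical
    refine ⟨M + 1, fun k => (if k < M then mul (a k) v0 else 0) +
      (if k = 0 then 0 else mul (a (k - 1)) u), fun t => ?_⟩
    have h0 : ppow mul (v0 + t • u) (m + 2) = mul (ppow mul (v0 + t • u) (m + 1)) (v0 + t • u) :=
      rfl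
    rw [h0, ha t]
    have expand : ∀ y : H, mul (∑ k ∈ Finset.range M, t ^ k • a k) y
        = ∑ k ∈ Finset.range M, t ^ k • mul (a k) y := by
      intro y
      rw [map_sum mul _ _, LinearMap.sum_apply]
      refine Finset.sum_congr rfl fun k _ => ?_
      rw [map_smul, LinearMap.smul_apply]
    rw [map_add (mul _), map_smul (mul _), expand v0, expand u, Finset.smul_sum]
    have hA : ∑ k ∈ Finset.range (M + 1),
        t ^ k • ((if k < M then mul (a k) v0 else 0) +
          (if k = 0 then 0 else mul (a (k - 1)) u))
        = (∑ k ∈ Finset.range (M + 1), t ^ k • (if k < M then mul (a k) v0 else 0))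
          + ∑ k ∈ Finset.range (M + 1), t ^ k • (if k = 0 then 0 else mul (a (k - 1)) u) := by
      rw [← Finset.sum_add_distrib]
      exact Finset.sum_congr rfl fun k _ => smul_add _ _ _
    rw [hA]
    congr 1
    · rw [Finset.sum_range_succ, if_neg (lt_irrefl M), smul_zero, add_zero]
      exact (Finset.sum_congr rfl fun k hk => by
        rw [if_pos (Finset.mem_range.mp hk)]).symm
    · rw [Finset.sum_range_succ'
        (fun k => t ^ k • (if k = 0 then (0 : H) else mul (a (k - 1)) u)) M]
      simp [smul_smul, pow_succ']

lemma uniform_nil (mul : H →ₗ[ℂ] H →ₗ[ℂ] H) (hcomm : ∀ x y : H, mul x y = mul y x)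
    (hcont : ∀ x : H, Continuous fun y => mul x y) (hnil : IsNil mul) :
    ∃ N : ℕ, 1 ≤ N ∧ ∀ v : H, ppow mul v N = 0 := by
  -- joint continuity of the multiplication
  have hbound : ∃ C : ℝ, ∀ x y : H, ‖mul x y‖ ≤ C * ‖x‖ * ‖y‖ := by
    set T : H → H →L[ℂ] H := fun x => ⟨mul x, hcont x⟩ with hT
    have hpt : ∀ w : H, ∃ C, ∀ x : Metric.closedBall (0 : H) 1, ‖T x.1 w‖ ≤ C := by
      intro w
      refine ⟨‖T w‖, fun x => ?_⟩
      have h1 : T x.1 w = T w x.1 := hcomm x.1 w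
      have h2 : ‖x.1‖ ≤ 1 := mem_closedBall_zero_iff.mp x.2
      calc ‖T x.1 w‖ = ‖T w x.1‖ := by rw [h1]
        _ ≤ ‖T w‖ * ‖x.1‖ := (T w).le_opNorm x.1
        _ ≤ ‖T w‖ * 1 := mul_le_mul_of_nonneg_left h2 (norm_nonneg _)
        _ = ‖T w‖ := mul_one _
    obtain ⟨C, hC⟩ := banach_steinhaus hpt
    refine ⟨C, fun x y => ?_⟩
    rcases eq_or_ne x 0 with rfl | hx
    · simp [map_zero]
    · have hxpos : 0 < ‖x‖ := norm_pos_iff.mpr hx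
      set x' : H := ((‖x‖ : ℂ))⁻¹ • x with hx'
      have hx'norm : ‖x'‖ = 1 := by
        rw [hx', norm_smul, norm_inv]
        simp only [Complex.norm_real, Real.norm_eq_abs, abs_of_nonneg (norm_nonneg x)]
        field_simp
      have hmem : x' ∈ Metric.closedBall (0 : H) 1 := by
        rw [mem_closedBall_zero_iff, hx'norm]
      have h1 : ‖T x' y‖ ≤ C * ‖y‖ :=
        le_trans ((T x').le_opNorm y)
          (mul_le_mul_of_nonneg_right (hC ⟨x', hmem⟩) (norm_nonneg y))
      have h2 : T x' y = ((‖x‖ : ℂ))⁻¹ • mul x y := by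
        show mul x' y = _
        rw [hx', map_smul, LinearMap.smul_apply]
      have h3 : ‖T x' y‖ = ‖x‖⁻¹ * ‖mul x y‖ := by
        rw [h2, norm_smul, norm_inv]
        simp only [Complex.norm_real, Real.norm_eq_abs, abs_of_nonneg (norm_nonneg x)]
      have h4 : ‖x‖⁻¹ * ‖mul x y‖ ≤ C * ‖y‖ := by rw [← h3]; exact h1
      have h5 : ‖mul x y‖ = ‖x‖ * (‖x‖⁻¹ * ‖mul x y‖) := by field_simp
      rw [h5]
      calc ‖x‖ * (‖x‖⁻¹ * ‖mul x y‖) ≤ ‖x‖ * (C * ‖y‖) :=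
            mul_le_mul_of_nonneg_left h4 (norm_nonneg x)
        _ = C * ‖x‖ * ‖y‖ := by ring
  obtain ⟨C, hC⟩ := hbound
  set B : H →L[ℂ] H →L[ℂ] H := LinearMap.mkContinuous₂ mul C hC with hB
  have hBcont : Continuous fun p : H × H => mul p.1 p.2 := by
    have := B.continuous₂
    exact (by simpa [hB, Function.uncurry] using this :
      Continuous (Function.uncurry fun x y => mul x y))
  have contp : ∀ m : ℕ, Continuous fun v : H => ppow mul v (m + 1) := by
    intro m
    induction m with
    | zero =>
      have h1 : (fun v : H => ppow mul v 1) = fun v => v := rfl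
      rw [h1]; exact continuous_id
    | succ m ih =>
      have h1 : (fun v : H => ppow mul v (m + 2))
          = fun v => mul (ppow mul v (m + 1)) v := rfl
      rw [h1]
      exact hBcont.comp (ih.prodMk continuous_id)
  have hcover : (⋃ n : ℕ, {v : H | ppow mul v (n + 1) = 0}) = Set.univ := by
    ext v
    simp only [Set.mem_iUnion, Set.mem_univ, iff_true, Set.mem_setOf_eq]
    obtain ⟨n, hn1, hn2⟩ := hnil v
    exact ⟨n - 1, by rwa [Nat.sub_add_cancel hn1]⟩
  have hclosed : ∀ n : ℕ, IsClosed {v : H | ppow mul v (n + 1) = 0} := fun n =>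
    isClosed_singleton.preimage (contp n)
  obtain ⟨n, hn⟩ := nonempty_interior_of_iUnion_of_closed hclosed hcover
  obtain ⟨v0, hv0⟩ := hn
  obtain ⟨r, hr, hball⟩ := Metric.isOpen_iff.mp isOpen_interior v0 hv0
  have hball' : Metric.ball v0 r ⊆ {v : H | ppow mul v (n + 1) = 0} :=
    hball.trans interior_subset
  refine ⟨n + 1, by omega, fun w => ?_⟩
  set u := w - v0 with hu
  by_cases hu0 : u = 0
  · have hw : w = v0 := by
      have := sub_eq_zero.mp hu0
      exact this
    have h1 : ppow mul v0 (n + 1) = 0 := hball' (Metric.mem_ball_self hr)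
    rwa [hw]
  · obtain ⟨M, a, ha⟩ := poly_rep mul v0 u n
    set y := ppow mul w (n + 1) with hy
    have hupos : 0 < ‖u‖ := norm_pos_iff.mpr hu0
    set ε := r / ‖u‖ with hε'
    have hε : 0 < ε := div_pos hr hupos
    set q : Polynomial ℂ :=
      ∑ k ∈ Finset.range M, Polynomial.C (inner ℂ y (a k) : ℂ) * Polynomial.X ^ k with hq
    have heval : ∀ t : ℂ, q.eval t = (inner ℂ y (ppow mul (v0 + t • u) (n + 1)) : ℂ) := by
      intro t
      rw [ha t, inner_sum]
      simp only [hq, Polynomial.eval_finset_sum, Polynomial.eval_mul, Polynomial.eval_C,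
        Polynomial.eval_pow, Polynomial.eval_X, inner_smul_right]
      exact Finset.sum_congr rfl fun k _ => mul_comm _ _
    have hroot : ∀ t : ℂ, ‖t‖ < ε → q.eval t = 0 := by
      intro t ht
      have hmem : v0 + t • u ∈ Metric.ball v0 r := by
        rw [Metric.mem_ball, dist_eq_norm, add_sub_cancel_left, norm_smul]
        calc ‖t‖ * ‖u‖ < ε * ‖u‖ := mul_lt_mul_of_pos_right ht hupos
          _ = r := by rw [hε']; field_simp
      have h1 := hball' hmem
      rw [heval t, h1, inner_zero_right]
    have hinf : {x : ℂ | q.IsRoot x}.Infinite := by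
      apply Set.infinite_of_injective_forall_mem
        (f := fun m : ℕ => (((ε / ((m : ℝ) + 2)) : ℝ) : ℂ))
      · intro a' b' hab
        have h1 : (ε / ((a' : ℝ) + 2) : ℝ) = ε / ((b' : ℝ) + 2) := Complex.ofReal_inj.mp hab
        have ha2 : ((a' : ℝ) + 2) ≠ 0 := by positivity
        have hb2 : ((b' : ℝ) + 2) ≠ 0 := by positivity
        rw [div_eq_div_iff ha2 hb2] at h1
        have h3 : ((b' : ℝ) + 2) = ((a' : ℝ) + 2) := mul_left_cancel₀ hε.ne' h1
        have h2 : (a' : ℝ) = (b' : ℝ) := by linarith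
        exact_mod_cast h2
      · intro m
        show q.IsRoot (((ε / ((m : ℝ) + 2) : ℝ)) : ℂ)
        apply hroot
        have h1 : ‖(((ε / ((m : ℝ) + 2)) : ℝ) : ℂ)‖ = ε / ((m : ℝ) + 2) := by
          rw [Complex.norm_real, Real.norm_eq_abs, abs_of_pos (by positivity)]
        rw [h1]
        apply div_lt_self hε
        have h4 : (0 : ℝ) ≤ (m : ℝ) := Nat.cast_nonneg m
        linarith
    have hq0 : q = 0 := Polynomial.eq_zero_of_infinite_isRoot q hinf
    have h1 : (inner ℂ y y : ℂ) = 0 := by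
      have h2 := heval 1
      rw [hq0, Polynomial.eval_zero] at h2
      rw [show v0 + (1 : ℂ) • u = w from by rw [one_smul, hu]; abel] at h2
      rw [← hy] at h2
      exact h2.symm
    exact inner_self_eq_zero.mp h1

/-- Let `𝒜` be a complex separable Hilbert evolution algebra with natural
orthonormal basis `𝓑 = {e i}`. If `𝒜` is nil, then there are no oriented cycles in
`G(𝒜,𝓑)` and `δ(G_i(𝒜,𝓑)) < ∞` for every `i ∈ ℕ`. -/
theorem stmt_12
    (mul : H →ₗ[ℂ] H →ₗ[ℂ] H)
    (hcomm : ∀ x y : H, mul x y = mul y x)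
    (hcont : ∀ x : H, Continuous fun y => mul x y)
    (e : HilbertBasis ℕ ℂ H)
    (hnat : ∀ i j : ℕ, i ≠ j → mul (e i) (e j) = 0)
    (ω : ℕ → ℕ → ℂ)
    (hω : ∀ i k : ℕ, ω i k = structConst mul e i k)
    (hnil : IsNil mul) :
    ¬ HasOrientedCycle ω ∧ ∀ i : ℕ, depth ω i < ⊤ := by
  have hnc : ¬ HasOrientedCycle ω := no_cycle mul hcomm hcont e hnat ω hω hnil
  refine ⟨hnc, fun i => ?_⟩
  obtain ⟨N, hN1, hNall⟩ := uniform_nil mul hcomm hcont hnil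
  have hbound : ∀ u ∈ Desc ω i, gdist ω i u ≤ N := by
    intro u hu
    have hne : {n : ℕ | u ∈ Dm ω n i}.Nonempty := by
      simp only [Desc, Set.mem_iUnion, Set.mem_setOf_eq] at hu
      obtain ⟨m, _, hm2⟩ := hu
      exact ⟨m, hm2⟩
    set d := gdist ω i u with hd
    have hud : u ∈ Dm ω d i := Nat.sInf_mem hne
    have hmind : ∀ n', u ∈ Dm ω n' i → d ≤ n' := fun n' h => Nat.sInf_le h
    rcases Nat.eq_zero_or_pos d with h0 | hdpos
    · omega
    obtain ⟨f, hf0, hfd, hfe⟩ := (mem_dm_iff ω i d u).mp hud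
    have hlab : ∀ x, x ≤ d → gdist ω i (f x) = x := by
      intro x hx
      have h1 : f x ∈ Dm ω x i :=
        (mem_dm_iff ω i x (f x)).mpr ⟨f, hf0, rfl, fun t ht => hfe t (by omega)⟩
      have hne2 : {n : ℕ | f x ∈ Dm ω n i}.Nonempty := ⟨x, h1⟩
      have hle : gdist ω i (f x) ≤ x := Nat.sInf_le h1
      rcases eq_or_lt_of_le hle with h | h
      · exact h
      · exfalso
        set s' := gdist ω i (f x) with hs'
        have h2 : f x ∈ Dm ω s' i := Nat.sInf_mem hne2
        have h3 : u ∈ Dm ω (d - x) (f x) := by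
          refine (mem_dm_iff ω (f x) (d - x) u).mpr
            ⟨fun m => f (x + m), rfl, ?_, fun t ht => hfe (x + t) (by omega)⟩
          show f (x + (d - x)) = u
          rw [show x + (d - x) = d from by omega, hfd]
        have h4 : u ∈ Dm ω (s' + (d - x)) i := dm_trans h2 h3
        have h5 := hmind _ h4
        omega
    have hinjf : ∀ x y, x ≤ d → y ≤ d → f x = f y → x = y := by
      intro x y hx hy hxy
      rw [← hlab x hx, ← hlab y hy, hxy]
    have hchord : ∀ a c, a < d → c < d → ω (f a) (f c) ≠ 0 → c = a + 1 := by
      intro a c ha hc hω0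
      rcases lt_trichotomy c (a + 1) with h | h | h
      · exfalso
        apply hnc
        exact cycle_of_segment ω f c a (by omega)
          (fun m hm1 hm2 => hfe m (by omega)) hω0
          (fun x y hx1 hx2 hy1 hy2 hxy => hinjf x y (by omega) (by omega) hxy)
      · exact h
      · exfalso
        have h1 : f a ∈ Dm ω a i :=
          (mem_dm_iff ω i a (f a)).mpr ⟨f, hf0, rfl, fun t ht => hfe t (by omega)⟩
        have h2 : f c ∈ Dm ω (a + 1) i := ⟨f a, h1, hω0⟩
        have h3 : gdist ω i (f c) ≤ a + 1 := Nat.sInf_le h2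
        have h4 := hlab c (le_of_lt hc)
        omega
    by_contra hNd
    push_neg at hNd
    have hkey := key_lemma mul hcomm hcont e hnat ω hω
      ((Finset.range d).image f) f (d - 1) ?_ ?_ ?_ ?_ (N - 1) (by omega)
    · rw [show N - 1 + 1 = N from by omega, hNall] at hkey
      exact hkey (by simp)
    · exact Finset.mem_image.mpr ⟨0, Finset.mem_range.mpr hdpos, rfl⟩
    · intro m hm
      exact Finset.mem_image.mpr ⟨m, Finset.mem_range.mpr (by omega), rfl⟩
    · intro m hm
      exact hfe m (by omega)
    · intro m hm j hj hωj
      obtain ⟨a, haR, rfl⟩ := Finset.mem_image.mp hj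
      have h1 := hchord a (m + 1) (Finset.mem_range.mp haR) (by omega) hωj
      have h2 : a = m := by omega
      rw [h2]
  have hle : depth ω i ≤ (N : ℕ∞) := by
    rw [depth]
    exact iSup₂_le fun u hu => Nat.cast_le.mpr (hbound u hu)
  exact lt_of_le_of_lt hle (ENat.coe_lt_top N)

end
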